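/- For every finite graph F, the map sending an automorphism f of F to the permutation of cliques K ↦ f(K) is an injective group homomorphism from the automorphism group of F into the automorphism group of the simplex graph κ(F), and its image is exactly the stabilizer in Aut(κ(F)) of the vertex of κ(F) corresponding to the empty clique. -/

import Mathlib

open SimpleGraph

/-- The simplex graph `κ(F)` of a graph `F`: vertices are the cliques of `F`
(including the empty clique), two cliques being adjacent iff one is obtained
from the other by adding a single vertex. -/
def simplexGraph {α : Type} (F : SimpleGraph α) :
    SimpleGraph {s : Finset α // F.IsClique (s : Set α)} :=
  SimpleGraph.fromRel (fun s t =>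
    ∃ a : α, a ∉ s.1 ∧ (t.1 : Set α) = insert a (s.1 : Set α))

/-- The automorphism group of a graph `G`, as the subgroup of permutations of
the vertex set preserving adjacency and non-adjacency. -/
def autGroup {V : Type} (G : SimpleGraph V) : Subgroup (Equiv.Perm V) where
  carrier := {f | ∀ u v : V, G.Adj (f u) (f v) ↔ G.Adj u v}
  one_mem' := fun u v => Iff.rfl
  mul_mem' := by
    intro a b ha hb u v
    simp only [Equiv.Perm.mul_apply]
    exact (ha _ _).trans (hb _ _)
  inv_mem' := by
    intro a ha u v
    simpa using (ha (a⁻¹ u) (a⁻¹ v)).symm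

/-- The empty clique, as a vertex of the simplex graph. -/
def emptyClique {α : Type} (F : SimpleGraph α) :
    {s : Finset α // F.IsClique (s : Set α)} :=
  ⟨∅, by simp⟩


theorem Equiv.Perm.inv_apply_self {β : Type*} (e : Equiv.Perm β) (x : β) : e⁻¹ (e x) = x :=
  e.symm_apply_apply x

theorem Equiv.Perm.apply_inv_self {β : Type*} (e : Equiv.Perm β) (x : β) : e (e⁻¹ x) = x :=
  e.apply_symm_apply x

section Helpers


variable {α : Type} [DecidableEq α] (F : SimpleGraph α)

abbrev SimpCl (F : SimpleGraph α) := {s : Finset α // F.IsClique (s : Set α)}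

lemma mem_autGroup_iff {V : Type} (G : SimpleGraph V) (f : Equiv.Perm V) :
    f ∈ autGroup G ↔ ∀ u v : V, G.Adj (f u) (f v) ↔ G.Adj u v := Iff.rfl

lemma simplexGraph_adj (s t : SimpCl F) :
    (simplexGraph F).Adj s t ↔ s ≠ t ∧
      ((∃ a ∉ s.1, t.1 = insert a s.1) ∨ (∃ a ∉ t.1, s.1 = insert a t.1)) := by
  show (s ≠ t ∧ _) ↔ _
  simp only [← Finset.coe_insert, Finset.coe_inj]

lemma adj_card {K L : SimpCl F} (h : (simplexGraph F).Adj K L) :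
    L.1.card = K.1.card + 1 ∨ K.1.card = L.1.card + 1 := by
  rw [simplexGraph_adj] at h
  obtain ⟨-, ⟨a, ha, ht⟩ | ⟨a, ha, ht⟩⟩ := h
  · left; rw [ht, Finset.card_insert_of_notMem ha]
  · right; rw [ht, Finset.card_insert_of_notMem ha]

lemma adj_subset {K L : SimpCl F} (h : (simplexGraph F).Adj K L)
    (hc : K.1.card < L.1.card) : K.1 ⊆ L.1 := by
  rw [simplexGraph_adj] at h
  obtain ⟨-, ⟨a, ha, ht⟩ | ⟨a, ha, ht⟩⟩ := h
  · rw [ht]; exact Finset.subset_insert a K.1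
  · exfalso; rw [ht, Finset.card_insert_of_notMem ha] at hc; omega

lemma clique_erase (K : SimpCl F) (a : α) :
    F.IsClique ((K.1.erase a : Finset α) : Set α) :=
  K.2.subset (by exact_mod_cast Finset.erase_subset a K.1)

lemma adj_erase {K : SimpCl F} {a : α} (ha : a ∈ K.1) :
    (simplexGraph F).Adj ⟨K.1.erase a, clique_erase F K a⟩ K := by
  rw [simplexGraph_adj]
  refine ⟨fun h => ?_, Or.inl ⟨a, Finset.notMem_erase a K.1, (Finset.insert_erase ha).symm⟩⟩
  have := congrArg Subtype.val h
  exact (Finset.erase_eq_self.mp this) ha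

/-- The singleton clique. -/
def sing (a : α) : SimpCl F := ⟨{a}, by simp [SimpleGraph.IsClique, Set.pairwise_singleton]⟩

lemma card_fix : ∀ n : ℕ, ∀ g : Equiv.Perm (SimpCl F),
    g ∈ autGroup (simplexGraph F) → g (emptyClique F) = emptyClique F →
    ∀ K : SimpCl F, K.1.card = n → (g K).1.card = n := by
  intro n
  induction n using Nat.strong_induction_on with
  | _ n IH =>
    intro g hg h0 K hK
    rcases n with _ | n
    · have : K = emptyClique F := Subtype.ext (Finset.card_eq_zero.mp hK)
      rw [this, h0]; rfl
    · obtain ⟨a, ha⟩ : K.1.Nonempty := Finset.card_pos.mp (by omega)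
      set K' : SimpCl F := ⟨K.1.erase a, clique_erase F K a⟩ with hK'def
      have hcK' : K'.1.card = n := by
        simp only [hK'def, Finset.card_erase_of_mem ha, hK]; rfl
      have hadj2 : (simplexGraph F).Adj (g K') (g K) := (hg K' K).mpr (adj_erase F ha)
      have hgK' : (g K').1.card = n := IH n (Nat.lt_succ_self n) g hg h0 K' hcK'
      rcases adj_card F hadj2 with h | h
      · rw [hgK'] at h; exact h
      · exfalso
        rw [hgK'] at h
        have hm : (g K).1.card < n + 1 := by omega
        have h0' : g⁻¹ (emptyClique F) = emptyClique F := by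
          have h1 := congrArg (fun K => g⁻¹ K) h0
          simp only [Equiv.Perm.inv_apply_self] at h1
          exact h1.symm
        have := IH _ hm g⁻¹ ((autGroup (simplexGraph F)).inv_mem hg) h0' (g K) rfl
        rw [Equiv.Perm.inv_apply_self] at this
        omega

lemma adj_of_adj (g : Equiv.Perm (SimpCl F)) (hg : g ∈ autGroup (simplexGraph F))
    (hcard : ∀ K : SimpCl F, (g K).1.card = K.1.card)
    (f : α → α) (hfs : ∀ a : α, g (sing F a) = sing F (f a))
    {a b : α} (hab : F.Adj a b) : F.Adj (f a) (f b) := by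
  have hne : a ≠ b := hab.ne
  have hPc : F.IsClique (({a, b} : Finset α) : Set α) := by
    rw [Finset.coe_pair]
    exact isClique_pair.mpr (fun _ => hab)
  set P : SimpCl F := ⟨{a, b}, hPc⟩ with hPdef
  have hcP : P.1.card = 2 := Finset.card_pair hne
  have hP1 : (simplexGraph F).Adj (sing F a) P := by
    rw [simplexGraph_adj]
    constructor
    · intro h
      have hc : (sing F a).1.card = P.1.card := by rw [h]
      rw [hcP] at hc
      simp [sing] at hc
    · left
      exact ⟨b, by simp [hne.symm, sing], by simp [sing, Finset.pair_comm a b, hPdef]⟩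
  have hP2 : (simplexGraph F).Adj (sing F b) P := by
    rw [simplexGraph_adj]
    constructor
    · intro h
      have hc : (sing F b).1.card = P.1.card := by rw [h]
      rw [hcP] at hc
      simp [sing] at hc
    · left
      exact ⟨a, by simp [hne, sing], by simp [sing, hPdef]⟩
  have hga : (simplexGraph F).Adj (sing F (f a)) (g P) := by
    rw [← hfs a]; exact (hg _ _).mpr hP1
  have hgb : (simplexGraph F).Adj (sing F (f b)) (g P) := by
    rw [← hfs b]; exact (hg _ _).mpr hP2
  have hlt : ((sing F (f a)) : SimpCl F).1.card < (g P).1.card := by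
    rw [hcard, hcP]; simp [sing]
  have hlt' : ((sing F (f b)) : SimpCl F).1.card < (g P).1.card := by
    rw [hcard, hcP]; simp [sing]
  have hma : f a ∈ (g P).1 := by
    have := adj_subset F hga hlt
    simpa [sing] using this
  have hmb : f b ∈ (g P).1 := by
    have := adj_subset F hgb hlt'
    simpa [sing] using this
  have hfne : f a ≠ f b := by
    intro h
    have : g (sing F a) = g (sing F b) := by rw [hfs, hfs, h]
    have := g.injective this
    have := congrArg Subtype.val this
    simp [sing] at this
    exact hne this
  exact (g P).2 (by exact_mod_cast hma) (by exact_mod_cast hmb) hfne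

lemma isClique_image {s : Finset α} (hs : F.IsClique (s : Set α)) (f : Equiv.Perm α)
    (hf : ∀ u v, F.Adj (f u) (f v) ↔ F.Adj u v) :
    F.IsClique ((s.image f : Finset α) : Set α) := by
  rw [Finset.coe_image]
  rintro x hx y hy hxy
  obtain ⟨a, ha, rfl⟩ := hx
  obtain ⟨b, hb, rfl⟩ := hy
  exact (hf a b).mpr (hs ha hb (fun h => hxy (by rw [h])))

lemma rel_image (f : Equiv.Perm α) (s t : Finset α) :
    (∃ a ∉ s.image f, t.image f = insert a (s.image f)) ↔ ∃ a ∉ s, t = insert a s := by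
  constructor
  · rintro ⟨a, ha, h⟩
    have hat : a ∈ t.image f := by rw [h]; exact Finset.mem_insert_self a _
    obtain ⟨b, hb, rfl⟩ := Finset.mem_image.mp hat
    refine ⟨b, fun hbs => ha (Finset.mem_image_of_mem f hbs), ?_⟩
    apply Finset.image_injective f.injective
    rw [h, Finset.image_insert]
  · rintro ⟨a, ha, rfl⟩
    refine ⟨f a, ?_, by rw [Finset.image_insert]⟩
    intro h
    obtain ⟨b, hb, hfb⟩ := Finset.mem_image.mp h
    exact ha (f.injective hfb ▸ hb)

/-- The permutation of cliques induced by an automorphism. -/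
def cliqueEquiv (f : autGroup F) : Equiv.Perm (SimpCl F) where
  toFun K := ⟨K.1.image (f : Equiv.Perm α), isClique_image F K.2 f f.2⟩
  invFun K := ⟨K.1.image ((f : Equiv.Perm α)⁻¹ : Equiv.Perm α),
    isClique_image F K.2 _ ((autGroup F).inv_mem f.2)⟩
  left_inv K := Subtype.ext (by
    simp [Finset.image_image, Function.comp_def])
  right_inv K := Subtype.ext (by
    simp [Finset.image_image, Function.comp_def])

lemma cliqueEquiv_mem (f : autGroup F) : cliqueEquiv F f ∈ autGroup (simplexGraph F) := by
  intro K L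
  rw [simplexGraph_adj, simplexGraph_adj]
  have hinj : Function.Injective (cliqueEquiv F f) := (cliqueEquiv F f).injective
  rw [hinj.ne_iff]
  show _ ∧ ((∃ a ∉ K.1.image _, L.1.image _ = insert a (K.1.image _)) ∨
      (∃ a ∉ L.1.image _, K.1.image _ = insert a (L.1.image _))) ↔ _
  rw [rel_image, rel_image]

/-- The group homomorphism from `Aut F` to `Aut κ(F)`. -/
def cliqueHom : autGroup F →* autGroup (simplexGraph F) where
  toFun f := ⟨cliqueEquiv F f, cliqueEquiv_mem F f⟩
  map_one' := by
    apply Subtype.ext; apply Equiv.ext; intro K; apply Subtype.ext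
    show ((cliqueEquiv F 1) K).1 = K.1
    simp [cliqueEquiv]
  map_mul' f g := by
    apply Subtype.ext; apply Equiv.ext; intro K; apply Subtype.ext
    show ((cliqueEquiv F (f * g)) K).1 = ((cliqueEquiv F f) ((cliqueEquiv F g) K)).1
    simp [cliqueEquiv, Finset.image_image, Function.comp_def]

end Helpers


/-- For every finite graph `F`, the map sending an automorphism `f` of `F` to
the permutation of cliques `K ↦ f(K)` is an injective group homomorphism from
`Aut F` into `Aut κ(F)` whose image is exactly the stabilizer of the vertex of
`κ(F)` corresponding to the empty clique. -/
theorem aut_simplexGraph_of_aut {α : Type} [Fintype α] [DecidableEq α]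
    (F : SimpleGraph α) :
    ∃ φ : autGroup F →* autGroup (simplexGraph F),
      Function.Injective φ ∧
      (∀ (f : autGroup F) (K : {s : Finset α // F.IsClique (s : Set α)}),
        (((φ f : Equiv.Perm {s : Finset α // F.IsClique (s : Set α)}) K) :
            Finset α) = K.1.image (f : Equiv.Perm α)) ∧
      (∀ g : autGroup (simplexGraph F),
        g ∈ φ.range ↔
          (g : Equiv.Perm {s : Finset α // F.IsClique (s : Set α)})
            (emptyClique F) = emptyClique F) := by
  refine ⟨cliqueHom F, ?_, fun f K => rfl, ?_⟩
  · -- injectivity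
    intro f g h
    apply Subtype.ext
    apply Equiv.ext
    intro a
    have := congrArg (fun ψ : autGroup (simplexGraph F) =>
      (((ψ : Equiv.Perm (SimpCl F)) (sing F a)) : Finset α)) h
    simp only [cliqueHom, cliqueEquiv, sing, MonoidHom.coe_mk, OneHom.coe_mk,
      Equiv.coe_fn_mk, Finset.image_singleton] at this
    exact Finset.singleton_inj.mp this
  · -- range characterization
    intro g
    constructor
    · rintro ⟨f, rfl⟩
      apply Subtype.ext
      show (((cliqueHom F f : autGroup (simplexGraph F)) :
        Equiv.Perm (SimpCl F)) (emptyClique F)).1 = (∅ : Finset α)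
      show (emptyClique F).1.image (f : Equiv.Perm α) = (∅ : Finset α)
      simp [emptyClique]
    · intro hg0
      -- extract the permutation on vertices
      have hg : ∀ K L : SimpCl F,
          (simplexGraph F).Adj ((g : Equiv.Perm (SimpCl F)) K)
            ((g : Equiv.Perm (SimpCl F)) L) ↔ (simplexGraph F).Adj K L := g.2
      have hginv : (g : Equiv.Perm (SimpCl F))⁻¹ ∈ autGroup (simplexGraph F) :=
        (autGroup (simplexGraph F)).inv_mem g.2
      have h0' : (g : Equiv.Perm (SimpCl F))⁻¹ (emptyClique F) = emptyClique F := by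
        have h1 := congrArg (fun K => ((g : Equiv.Perm (SimpCl F)))⁻¹ K) hg0
        simp only [Equiv.Perm.inv_apply_self] at h1
        exact h1.symm
      have hcard : ∀ K : SimpCl F, ((g : Equiv.Perm (SimpCl F)) K).1.card = K.1.card :=
        fun K => card_fix F _ _ g.2 hg0 K rfl
      have hcard' : ∀ K : SimpCl F,
          ((g : Equiv.Perm (SimpCl F))⁻¹ K).1.card = K.1.card :=
        fun K => card_fix F _ _ hginv h0' K rfl
      have hsing : ∀ a : α, ∃ b : α,
          (((g : Equiv.Perm (SimpCl F)) (sing F a)) : Finset α) = {b} := by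
        intro a
        apply Finset.card_eq_one.mp
        rw [hcard]; simp [sing]
      have hsing' : ∀ a : α, ∃ b : α,
          (((g : Equiv.Perm (SimpCl F))⁻¹ (sing F a)) : Finset α) = {b} := by
        intro a
        apply Finset.card_eq_one.mp
        rw [hcard']; simp [sing]
      choose f hf using hsing
      choose f' hf' using hsing'
      have hgs : ∀ a : α, (g : Equiv.Perm (SimpCl F)) (sing F a) = sing F (f a) :=
        fun a => Subtype.ext (hf a)
      have hgs' : ∀ a : α, (g : Equiv.Perm (SimpCl F))⁻¹ (sing F a) = sing F (f' a) :=
        fun a => Subtype.ext (hf' a)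
      have hleft : ∀ a : α, f' (f a) = a := by
        intro a
        have h1 := congrArg (fun K => ((g : Equiv.Perm (SimpCl F)))⁻¹ K) (hgs a)
        simp only [Equiv.Perm.inv_apply_self, hgs'] at h1
        have h2 := congrArg Subtype.val h1
        simp only [sing] at h2
        exact (Finset.singleton_inj.mp h2).symm
      have hright : ∀ a : α, f (f' a) = a := by
        intro a
        have h1 := congrArg (fun K => (g : Equiv.Perm (SimpCl F)) K) (hgs' a)
        simp only [Equiv.Perm.apply_inv_self, hgs] at h1
        have h2 := congrArg Subtype.val h1
        simp only [sing] at h2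
        exact (Finset.singleton_inj.mp h2).symm
      set fe : Equiv.Perm α := ⟨f, f', hleft, hright⟩ with hfe_def
      have hfe_mem : fe ∈ autGroup F := by
        intro u v
        constructor
        · intro h
          have h2 : F.Adj (f' (f u)) (f' (f v)) := adj_of_adj F _ hginv hcard' f' hgs' h
          rwa [hleft, hleft] at h2
        · exact fun h => adj_of_adj F _ g.2 hcard f hgs h
      -- the images agree on all cliques
      have himg : ∀ n : ℕ, ∀ K : SimpCl F, K.1.card = n →
          (((g : Equiv.Perm (SimpCl F)) K) : Finset α) = K.1.image f := by
        intro n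
        induction n using Nat.strong_induction_on with
        | _ n IH =>
          intro K hK
          match n, hK with
          | 0, hK =>
            have : K = emptyClique F := Subtype.ext (Finset.card_eq_zero.mp hK)
            rw [this, hg0]
            simp [emptyClique]
          | 1, hK =>
            obtain ⟨a, ha⟩ := Finset.card_eq_one.mp hK
            have : K = sing F a := Subtype.ext ha
            rw [this, hgs]
            simp [sing]
          | (n + 2), hK =>
            obtain ⟨a, haK, b, hbK, hab⟩ := Finset.one_lt_card.mp
              (show 1 < K.1.card by omega)
            set K1 : SimpCl F := ⟨K.1.erase a, clique_erase F K a⟩ with hK1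
            set K2 : SimpCl F := ⟨K.1.erase b, clique_erase F K b⟩ with hK2
            have hc1 : K1.1.card = n + 1 := by
              simp only [hK1, Finset.card_erase_of_mem haK, hK]; omega
            have hc2 : K2.1.card = n + 1 := by
              simp only [hK2, Finset.card_erase_of_mem hbK, hK]; omega
            have h1 := IH (n + 1) (by omega) K1 hc1
            have h2 := IH (n + 1) (by omega) K2 hc2
            have hadj1 : (simplexGraph F).Adj ((g : Equiv.Perm (SimpCl F)) K1)
                ((g : Equiv.Perm (SimpCl F)) K) := (hg K1 K).mpr (adj_erase F haK)
            have hadj2 : (simplexGraph F).Adj ((g : Equiv.Perm (SimpCl F)) K2)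
                ((g : Equiv.Perm (SimpCl F)) K) := (hg K2 K).mpr (adj_erase F hbK)
            have hsub1 : (((g : Equiv.Perm (SimpCl F)) K1) : Finset α)
                ⊆ (((g : Equiv.Perm (SimpCl F)) K) : Finset α) :=
              adj_subset F hadj1 (by rw [hcard, hcard, hc1, hK]; omega)
            have hsub2 : (((g : Equiv.Perm (SimpCl F)) K2) : Finset α)
                ⊆ (((g : Equiv.Perm (SimpCl F)) K) : Finset α) :=
              adj_subset F hadj2 (by rw [hcard, hcard, hc2, hK]; omega)
            rw [h1] at hsub1
            rw [h2] at hsub2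
            have hunion : K.1.erase a ∪ K.1.erase b = K.1 := by
              ext x
              simp only [Finset.mem_union, Finset.mem_erase]
              constructor
              · rintro (⟨-, hx⟩ | ⟨-, hx⟩) <;> exact hx
              · intro hx
                by_cases hxa : x = a
                · right; exact ⟨by rw [hxa]; exact hab, hx⟩
                · left; exact ⟨hxa, hx⟩
            have hsub : K.1.image f ⊆ (((g : Equiv.Perm (SimpCl F)) K) : Finset α) := by
              rw [← hunion, Finset.image_union]
              exact Finset.union_subset hsub1 hsub2
            have hcards : (((g : Equiv.Perm (SimpCl F)) K) : Finset α).card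
                ≤ (K.1.image f).card := by
              have hfinj : Function.Injective f :=
                fun x y hxy => by rw [← hleft x, hxy, hleft]
              rw [hcard, Finset.card_image_of_injective _ hfinj]
            exact (Finset.eq_of_subset_of_card_le hsub hcards).symm
      refine ⟨⟨fe, hfe_mem⟩, ?_⟩
      apply Subtype.ext
      apply Equiv.ext
      intro K
      apply Subtype.ext
      show K.1.image fe = (((g : Equiv.Perm (SimpCl F)) K) : Finset α)
      exact (himg K.1.card K rfl).symm
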